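/- arXiv:2401.04396 — 4 statements merged into one kernel-verified Lean document; each statement's English description precedes it below -/
import Mathlib

section
/- For every point s ∈ ℝ² and every ε with 0 < ε < 1, the cutoff function χ_{ε,s} is differentiable at every x in the open annulus {x : ε² < ‖x − s‖ < ε}, and at every such x its Fréchet derivative satisfies the uniform bound ‖Dχ_{ε,s}(x)‖ ≤ 4 / (e · (ε − ε²)), where e = exp(1). -/
/-- The plane ℝ² with the Euclidean norm. -/
abbrev E2 : Type := EuclideanSpace ℝ (Fin 2)

/-- The truncating (cutoff) function `χ_{ε,s}` of the paper. -/
noncomputable def chiCut (s : E2) (ε : ℝ) (x : E2) : ℝ :=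
  if ‖x - s‖ ≤ ε ^ 2 then 0
  else if ‖x - s‖ < ε then Real.exp ((ε - ‖x - s‖) / (ε ^ 2 - ‖x - s‖))
  else 1

lemma sq_mul_exp_neg_le (u : ℝ) (hu : 0 ≤ u) :
    u ^ 2 * Real.exp (-u) ≤ 4 * Real.exp (-2) := by
  have h : u / 2 ≤ Real.exp (u / 2 - 1) := by
    have := Real.add_one_le_exp (u / 2 - 1); linarith
  have he : Real.exp (u / 2 - 1) ^ 2 = Real.exp (u - 2) := by
    rw [sq, ← Real.exp_add]; ring_nf
  have hsq : u ^ 2 ≤ 4 * Real.exp (u - 2) := by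
    rw [← he]; nlinarith [Real.exp_pos (u / 2 - 1)]
  calc u ^ 2 * Real.exp (-u) ≤ 4 * Real.exp (u - 2) * Real.exp (-u) :=
        mul_le_mul_of_nonneg_right hsq (Real.exp_pos _).le
    _ = 4 * Real.exp (-2) := by rw [mul_assoc, ← Real.exp_add]; ring_nf

/-- on the open annulus `ε² < ‖x - s‖ < ε` the cutoff `χ_{ε,s}` is
differentiable and its Fréchet derivative is bounded by `4 / (e · (ε - ε²))`. -/
theorem chiCut_fderiv_bound (s : E2) (ε : ℝ) (hε0 : 0 < ε) (hε1 : ε < 1) (x : E2)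
    (h1 : ε ^ 2 < ‖x - s‖) (h2 : ‖x - s‖ < ε) :
    DifferentiableAt ℝ (chiCut s ε) x ∧
    ‖fderiv ℝ (chiCut s ε) x‖ ≤ 4 / (Real.exp 1 * (ε - ε ^ 2)) := by
  have hε2 : 0 < ε ^ 2 := by positivity
  set r : ℝ := ‖x - s‖ with hr
  -- scalar function
  set g : ℝ → ℝ := fun t => Real.exp ((ε - t) / (ε ^ 2 - t)) with hg
  set n : E2 → ℝ := fun y => ‖y - s‖ with hn
  -- the annulus is open and chiCut = g ∘ n on it
  have hopen : IsOpen {y : E2 | ε ^ 2 < ‖y - s‖ ∧ ‖y - s‖ < ε} := by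
    have hc : Continuous fun y : E2 => ‖y - s‖ := (continuous_id.sub continuous_const).norm
    exact (isOpen_Ioo.preimage hc)
  have hmem : x ∈ {y : E2 | ε ^ 2 < ‖y - s‖ ∧ ‖y - s‖ < ε} := ⟨h1, h2⟩
  have heq : chiCut s ε =ᶠ[nhds x] fun y => g (n y) := by
    filter_upwards [hopen.mem_nhds hmem] with y hy
    simp only [chiCut, hg, hn]
    rw [if_neg (not_le.mpr hy.1), if_pos hy.2]
  -- denominators
  have hden : ε ^ 2 - r ≠ 0 := by simp only [hr]; nlinarith
  -- derivative of g at r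
  have hq : HasDerivAt (fun t => (ε - t) / (ε ^ 2 - t))
      (((-1) * (ε ^ 2 - r) - (ε - r) * (-1)) / (ε ^ 2 - r) ^ 2) r := by
    exact ((hasDerivAt_id r).const_sub ε).div ((hasDerivAt_id r).const_sub (ε ^ 2)) hden
  have hgd : HasDerivAt g
      (Real.exp ((ε - r) / (ε ^ 2 - r)) *
        (((-1) * (ε ^ 2 - r) - (ε - r) * (-1)) / (ε ^ 2 - r) ^ 2)) r := hq.exp
  -- derivative of n at x
  have hx0 : x - s ≠ 0 := by
    have hpos : (0:ℝ) < ‖x - s‖ := lt_trans hε2 h1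
    exact norm_pos_iff.mp hpos
  have hnd : DifferentiableAt ℝ n x :=
    ((differentiableAt_id.sub (differentiableAt_const s))).norm ℝ hx0
  have hnf : HasFDerivAt n (fderiv ℝ n x) x := hnd.hasFDerivAt
  have hnlip : LipschitzWith 1 n := LipschitzWith.of_dist_le_mul fun y z => by
    simp only [hn, Real.dist_eq, dist_eq_norm, NNReal.coe_one, one_mul]
    calc |‖y - s‖ - ‖z - s‖| ≤ ‖(y - s) - (z - s)‖ := abs_norm_sub_norm_le _ _
      _ = ‖y - z‖ := by rw [sub_sub_sub_cancel_right]
  have hnnorm : ‖fderiv ℝ n x‖ ≤ 1 := by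
    simpa using norm_fderiv_le_of_lipschitz ℝ hnlip
  -- composition
  have hcomp : HasFDerivAt (fun y => g (n y))
      ((Real.exp ((ε - r) / (ε ^ 2 - r)) *
        (((-1) * (ε ^ 2 - r) - (ε - r) * (-1)) / (ε ^ 2 - r) ^ 2)) • fderiv ℝ n x) x :=
    HasDerivAt.comp_hasFDerivAt (h₂ := g) (f := n) x hgd hnf
  have hF : HasFDerivAt (chiCut s ε)
      ((Real.exp ((ε - r) / (ε ^ 2 - r)) *
        (((-1) * (ε ^ 2 - r) - (ε - r) * (-1)) / (ε ^ 2 - r) ^ 2)) • fderiv ℝ n x) x :=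
    hcomp.congr_of_eventuallyEq heq
  refine ⟨hF.differentiableAt, ?_⟩
  rw [hF.fderiv]
  -- bound the scalar derivative
  set a : ℝ := ε - ε ^ 2 with ha
  have ha0 : 0 < a := by nlinarith
  set t : ℝ := r - ε ^ 2 with ht
  have ht0 : 0 < t := by simp only [ht]; linarith
  have hta : t < a := by simp only [ht, ha]; linarith
  have htne : t ≠ 0 := ne_of_gt ht0
  have hnum : (-1) * (ε ^ 2 - r) - (ε - r) * (-1) = a := by rw [ha]; ring
  have hden2 : (ε ^ 2 - r) ^ 2 = t ^ 2 := by rw [ht]; ring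
  have hval : ((-1) * (ε ^ 2 - r) - (ε - r) * (-1)) / (ε ^ 2 - r) ^ 2 = a / t ^ 2 := by
    rw [hnum, hden2]
  have hval2 : (ε - r) / (ε ^ 2 - r) = 1 - a / t := by
    have h2' : (1 : ℝ) - a / t = (t - a) / t := by field_simp
    rw [h2', ha, ht, div_eq_div_iff hden (by rw [← ht]; exact htne)]
    ring
  set u : ℝ := a / t with hu
  have hu0 : 0 < u := div_pos ha0 ht0
  have key : Real.exp (1 - u) * (a / t ^ 2) ≤ 4 / (Real.exp 1 * a) := by
    have h1' : a / t ^ 2 = u ^ 2 / a := by rw [hu]; field_simp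
    rw [h1']
    have hk : u ^ 2 * Real.exp (-u) ≤ 4 * Real.exp (-2) := sq_mul_exp_neg_le u hu0.le
    have lhs_eq : Real.exp (1 - u) * (u ^ 2 / a) =
        (u ^ 2 * Real.exp (-u)) * Real.exp 1 / a := by
      rw [show (1 : ℝ) - u = -u + 1 by ring, Real.exp_add]; ring
    have rhs_eq : (4 * Real.exp (-2)) * Real.exp 1 / a = 4 / (Real.exp 1 * a) := by
      rw [show (-2 : ℝ) = -1 + -1 by norm_num, Real.exp_add, Real.exp_neg]
      have he1 : Real.exp 1 ≠ 0 := (Real.exp_pos 1).ne'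
      field_simp
    rw [lhs_eq, ← rhs_eq]
    gcongr
  calc ‖(Real.exp ((ε - r) / (ε ^ 2 - r)) *
        (((-1) * (ε ^ 2 - r) - (ε - r) * (-1)) / (ε ^ 2 - r) ^ 2)) • fderiv ℝ n x‖
      = |Real.exp ((ε - r) / (ε ^ 2 - r)) *
        (((-1) * (ε ^ 2 - r) - (ε - r) * (-1)) / (ε ^ 2 - r) ^ 2)| * ‖fderiv ℝ n x‖ := by
        rw [norm_smul]; rfl
    _ ≤ |Real.exp ((ε - r) / (ε ^ 2 - r)) *
        (((-1) * (ε ^ 2 - r) - (ε - r) * (-1)) / (ε ^ 2 - r) ^ 2)| * 1 :=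
        mul_le_mul_of_nonneg_left hnnorm (abs_nonneg _)
    _ = Real.exp (1 - u) * (a / t ^ 2) := by
        rw [mul_one, hval, hval2, abs_of_nonneg (by positivity)]
    _ ≤ 4 / (Real.exp 1 * a) := key
end

section
/- Fix a point s ∈ ℝ² and a real number γ > 0. Then ε^{1+γ} · sup{ ‖Dχ_{ε,s}(x)‖ : x ∈ ℝ², ε² < ‖x − s‖ < ε } tends to 0 as ε tends to 0 from the right. (This is property (2) of the truncating functions: ε^{1+γ} ‖∂_x χ_ε‖_∞ → 0 for every γ > 0.) -/
lemma gderiv (ε r : ℝ) (hr : r ∈ Set.Ioo (ε ^ 2) ε) :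
    HasDerivAt (fun r => Real.exp ((ε - r) / (ε ^ 2 - r)))
      (Real.exp ((ε - r) / (ε ^ 2 - r)) * ((ε - ε ^ 2) / (ε ^ 2 - r) ^ 2)) r := by
  have hne : ε ^ 2 - r ≠ 0 := by nlinarith [hr.1, hr.2]
  have h1 : HasDerivAt (fun r : ℝ => ε - r) (-1) r := by
    simpa using (hasDerivAt_id r).const_sub ε
  have h2 : HasDerivAt (fun r : ℝ => ε ^ 2 - r) (-1) r := by
    simpa using (hasDerivAt_id r).const_sub (ε ^ 2)
  have h4 := (h1.div h2 hne).exp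
  convert h4 using 1
  · rfl
  · simp only [Pi.div_apply]; ring

lemma core (A t : ℝ) (ht0 : 0 < t) (htA : t < A) :
    |Real.exp (1 - A / t) * (A / t ^ 2)| ≤ 4 * Real.exp 1 / A := by
  have hA0 : 0 < A := lt_trans ht0 htA
  have hdiv : 2 * t * (A / (2 * t)) = A := by field_simp
  have hv0 : 0 ≤ A / (2 * t) := by positivity
  have hexpv : A ^ 2 ≤ 4 * t ^ 2 * Real.exp (A / t) := by
    have e1 : Real.exp (A / t) = Real.exp (A / (2 * t)) ^ 2 := by
      rw [sq, ← Real.exp_add]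
      congr 1
      field_simp
      ring
    have hA2 : 4 * t ^ 2 * (A / (2 * t)) ^ 2 = A ^ 2 := by
      field_simp
      ring
    have hsq' : (A / (2 * t)) ^ 2 ≤ Real.exp (A / (2 * t)) ^ 2 := by
      nlinarith [Real.add_one_le_exp (A / (2 * t))]
    rw [e1, ← hA2]
    nlinarith [sq_nonneg t]
  have h5 : Real.exp (-(A / t)) ≤ 4 * t ^ 2 / A ^ 2 := by
    have hprod : Real.exp (-(A / t)) * Real.exp (A / t) = 1 := by
      rw [← Real.exp_add]; simp
    rw [le_div_iff₀ (by positivity)]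
    nlinarith [Real.exp_pos (-(A / t)), Real.exp_pos (A / t)]
  rw [abs_of_nonneg (by positivity)]
  have e2 : Real.exp (1 - A / t) = Real.exp 1 * Real.exp (-(A / t)) := by
    rw [← Real.exp_add]; ring_nf
  rw [e2]
  calc Real.exp 1 * Real.exp (-(A / t)) * (A / t ^ 2)
      ≤ Real.exp 1 * (4 * t ^ 2 / A ^ 2) * (A / t ^ 2) := by gcongr
    _ = 4 * Real.exp 1 / A := by field_simp

lemma gbound (ε r : ℝ) (hε0 : 0 < ε) (hε1 : ε < 1) (hr : r ∈ Set.Ioo (ε ^ 2) ε) :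
    |Real.exp ((ε - r) / (ε ^ 2 - r)) * ((ε - ε ^ 2) / (ε ^ 2 - r) ^ 2)|
      ≤ 4 * Real.exp 1 / (ε - ε ^ 2) := by
  obtain ⟨h1, h2⟩ := hr
  have ht0 : (0:ℝ) < r - ε ^ 2 := by linarith
  have hne : ε ^ 2 - r ≠ 0 := by intro h; linarith
  have hexp : (ε - r) / (ε ^ 2 - r) = 1 - (ε - ε ^ 2) / (r - ε ^ 2) := by
    field_simp
    ring
  have hsq : (ε ^ 2 - r) ^ 2 = (r - ε ^ 2) ^ 2 := by ring
  rw [hexp, hsq]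
  exact core (ε - ε ^ 2) (r - ε ^ 2) ht0 (by linarith)

lemma chiCut_eq_on (s : E2) (ε : ℝ) {x : E2}
    (hx : x ∈ {x : E2 | ε ^ 2 < ‖x - s‖ ∧ ‖x - s‖ < ε}) :
    chiCut s ε x = Real.exp ((ε - ‖x - s‖) / (ε ^ 2 - ‖x - s‖)) := by
  rw [chiCut, if_neg (not_le.2 hx.1), if_pos hx.2]

lemma chiCut_lip (s : E2) {ε : ℝ} (hε0 : 0 < ε) (hε1 : ε < 1) :
    LipschitzOnWith (4 * Real.exp 1 / (ε - ε ^ 2)).toNNReal (chiCut s ε)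
      {x : E2 | ε ^ 2 < ‖x - s‖ ∧ ‖x - s‖ < ε} := by
  have hε2 : ε ^ 2 < ε := by nlinarith
  have hL0 : (0:ℝ) ≤ 4 * Real.exp 1 / (ε - ε ^ 2) := by
    apply div_nonneg (by positivity) (by linarith)
  -- the 1d profile is Lipschitz on Ioo
  have hg : LipschitzOnWith (4 * Real.exp 1 / (ε - ε ^ 2)).toNNReal
      (fun r => Real.exp ((ε - r) / (ε ^ 2 - r))) (Set.Ioo (ε ^ 2) ε) := by
    apply (convex_Ioo _ _).lipschitzOnWith_of_nnnorm_hasDerivWithin_le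
      (f' := fun r => Real.exp ((ε - r) / (ε ^ 2 - r)) * ((ε - ε ^ 2) / (ε ^ 2 - r) ^ 2))
      (fun r hr => (gderiv ε r hr).hasDerivWithinAt)
    intro r hr
    rw [← NNReal.coe_le_coe, coe_nnnorm, Real.coe_toNNReal _ hL0, Real.norm_eq_abs]
    exact gbound ε r hε0 hε1 hr
  have hn : LipschitzWith 1 (fun x : E2 => ‖x - s‖) := by
    apply LipschitzWith.of_dist_le_mul
    intro x y
    rw [NNReal.coe_one, one_mul, Real.dist_eq, dist_eq_norm]
    simpa using abs_norm_sub_norm_le (x - s) (y - s)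
  have hmaps : Set.MapsTo (fun x : E2 => ‖x - s‖)
      {x : E2 | ε ^ 2 < ‖x - s‖ ∧ ‖x - s‖ < ε} (Set.Ioo (ε ^ 2) ε) :=
    fun x hx => ⟨hx.1, hx.2⟩
  have hcomp := hg.comp hn.lipschitzOnWith hmaps
  rw [mul_one] at hcomp
  intro x hx y hy
  have := hcomp hx hy
  rwa [Function.comp_apply, Function.comp_apply, ← chiCut_eq_on s ε hx,
    ← chiCut_eq_on s ε hy] at this

lemma chiCut_fderiv_le (s : E2) {ε : ℝ} (hε0 : 0 < ε) (hε1 : ε < 1) {x : E2}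
    (hx : x ∈ {x : E2 | ε ^ 2 < ‖x - s‖ ∧ ‖x - s‖ < ε}) :
    ‖fderiv ℝ (chiCut s ε) x‖ ≤ 4 * Real.exp 1 / (ε - ε ^ 2) := by
  have hε2 : ε ^ 2 < ε := by nlinarith
  have hL0 : (0:ℝ) ≤ 4 * Real.exp 1 / (ε - ε ^ 2) := by
    apply div_nonneg (by positivity) (by linarith)
  have hopen : IsOpen {x : E2 | ε ^ 2 < ‖x - s‖ ∧ ‖x - s‖ < ε} := by
    have hc : Continuous (fun x : E2 => ‖x - s‖) :=
      (continuous_id.sub continuous_const).norm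
    exact isOpen_Ioo.preimage hc
  have h := norm_fderiv_le_of_lipschitzOn ℝ (hopen.mem_nhds hx)
    (chiCut_lip s hε0 hε1)
  rwa [Real.coe_toNNReal _ hL0] at h

/-- property (2) of the truncating functions: for every `γ > 0`,
`ε^{1+γ} · sup { ‖Dχ_{ε,s}(x)‖ : ε² < ‖x - s‖ < ε } → 0` as `ε → 0⁺`. -/
theorem chiCut_eps_pow_sup_fderiv_tendsto_zero (s : E2) (γ : ℝ) (hγ : 0 < γ) :
    Filter.Tendsto
      (fun ε : ℝ => ε ^ (1 + γ) *
        sSup ((fun x : E2 => ‖fderiv ℝ (chiCut s ε) x‖) ''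
          {x : E2 | ε ^ 2 < ‖x - s‖ ∧ ‖x - s‖ < ε}))
      (nhdsWithin 0 (Set.Ioi 0)) (nhds 0) := by
  have hev : ∀ᶠ ε in nhdsWithin (0:ℝ) (Set.Ioi 0), ε ∈ Set.Ioo (0:ℝ) 1 :=
    Ioo_mem_nhdsGT_of_mem ⟨le_refl 0, one_pos⟩
  apply squeeze_zero' (g := fun ε : ℝ => 4 * Real.exp 1 / (1 - ε) * ε ^ γ)
  · filter_upwards [hev] with ε hε
    apply mul_nonneg (Real.rpow_nonneg hε.1.le _)
    apply Real.sSup_nonneg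
    rintro y ⟨x, -, rfl⟩
    exact norm_nonneg _
  · filter_upwards [hev] with ε hε
    obtain ⟨hε0, hε1⟩ := hε
    have hε2 : ε ^ 2 < ε := by nlinarith
    have hL0 : (0:ℝ) ≤ 4 * Real.exp 1 / (ε - ε ^ 2) := by
      apply div_nonneg (by positivity) (by linarith)
    have hsup : sSup ((fun x : E2 => ‖fderiv ℝ (chiCut s ε) x‖) ''
        {x : E2 | ε ^ 2 < ‖x - s‖ ∧ ‖x - s‖ < ε}) ≤ 4 * Real.exp 1 / (ε - ε ^ 2) := by
      apply Real.sSup_le _ hL0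
      rintro y ⟨x, hx, rfl⟩
      exact chiCut_fderiv_le s hε0 hε1 hx
    have heq : ε ^ (1 + γ) * (4 * Real.exp 1 / (ε - ε ^ 2))
        = 4 * Real.exp 1 / (1 - ε) * ε ^ γ := by
      rw [Real.rpow_add hε0, Real.rpow_one]
      have h3 : (1:ℝ) - ε ≠ 0 := by linarith
      have h4 : ε - ε ^ 2 ≠ 0 := by nlinarith
      field_simp
    calc ε ^ (1 + γ) * sSup _ ≤ ε ^ (1 + γ) * (4 * Real.exp 1 / (ε - ε ^ 2)) := by
          apply mul_le_mul_of_nonneg_left hsup (Real.rpow_nonneg hε0.le _)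
      _ = 4 * Real.exp 1 / (1 - ε) * ε ^ γ := heq
  · have h1 : Filter.Tendsto (fun ε : ℝ => 4 * Real.exp 1 / (1 - ε))
        (nhdsWithin (0:ℝ) (Set.Ioi 0)) (nhds (4 * Real.exp 1)) := by
      apply Filter.Tendsto.mono_left _ nhdsWithin_le_nhds
      have hc : ContinuousAt (fun ε : ℝ => 4 * Real.exp 1 / (1 - ε)) 0 := by
        apply ContinuousAt.div continuousAt_const (by fun_prop)
        norm_num
      simpa using hc.tendsto
    have h2 : Filter.Tendsto (fun ε : ℝ => ε ^ γ)
        (nhdsWithin (0:ℝ) (Set.Ioi 0)) (nhds 0) := by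
      have hc : ContinuousAt (fun ε : ℝ => ε ^ γ) 0 :=
        Real.continuousAt_rpow_const 0 γ (Or.inr hγ.le)
      have := hc.tendsto
      rw [Real.zero_rpow hγ.ne'] at this
      exact this.mono_left nhdsWithin_le_nhds
    simpa using h1.mul h2
end

section
/- Let s ∈ ℝ², γ > 0, M ≥ 0, and let G : ℝ² → ℝ satisfy the domination condition |G(x)| ≤ M · ‖x − s‖^{1+γ} for all x with ‖x − s‖ < 1. Then for every ε with 0 < ε ≤ 1/2 and every x in the open annulus ε² < ‖x − s‖ < ε, one has |G(x)| · ‖Dχ_{ε,s}(x)‖ ≤ (8M/e) · ε^{γ}, where e = exp(1). -/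
lemma exp_sq_bound {u : ℝ} (hu : 0 < u) : Real.exp 1 ^ 2 * u ^ 2 / 4 ≤ Real.exp u := by
  have h : Real.exp 1 * (u / 2) ≤ Real.exp (u / 2) := by
    have := Real.add_one_le_exp (u / 2 - 1)
    have h2 : Real.exp (u/2 - 1) * Real.exp 1 = Real.exp (u/2) := by
      rw [← Real.exp_add]; ring_nf
    nlinarith [Real.exp_pos 1, Real.exp_pos (u/2 - 1)]
  have h3 : Real.exp (u/2) * Real.exp (u/2) = Real.exp u := by
    rw [← Real.exp_add]; ring_nf
  nlinarith [Real.exp_pos (u/2), mul_pos (Real.exp_pos 1) (half_pos hu),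
    mul_self_le_mul_self (le_of_lt (mul_pos (Real.exp_pos 1) (half_pos hu))) h]

/-- if `|G(x)| ≤ M ‖x - s‖^{1+γ}` near `s` (the paper's domination
condition (1.10)), then for `0 < ε ≤ 1/2` and `x` in the annulus `ε² < ‖x - s‖ < ε`
one has `|G(x)| · ‖Dχ_{ε,s}(x)‖ ≤ (8M/e) · ε^γ`. -/
theorem domination_times_fderiv_bound (s : E2) (γ M : ℝ) (hγ : 0 < γ) (hM : 0 ≤ M)
    (G : E2 → ℝ) (hG : ∀ x : E2, ‖x - s‖ < 1 → |G x| ≤ M * ‖x - s‖ ^ (1 + γ))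
    (ε : ℝ) (hε0 : 0 < ε) (hε : ε ≤ 1 / 2) (x : E2)
    (h1 : ε ^ 2 < ‖x - s‖) (h2 : ‖x - s‖ < ε) :
    |G x| * ‖fderiv ℝ (chiCut s ε) x‖ ≤ (8 * M / Real.exp 1) * ε ^ γ := by
  set r : ℝ := ‖x - s‖ with hrdef
  have hr0 : 0 < r := lt_of_le_of_lt (sq_nonneg ε) h1
  have hxs : x - s ≠ 0 := by
    intro h
    rw [hrdef] at hr0
    rw [h] at hr0
    simp at hr0
  have hden : ε ^ 2 - r ≠ 0 := by
    intro h; linarith [h1]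
  -- the norm function
  have hn : DifferentiableAt ℝ (fun y : E2 => ‖y - s‖) x :=
    ((differentiable_id.sub_const s) x).norm ℝ hxs
  have hlip : LipschitzWith 1 (fun y : E2 => ‖y - s‖) := by
    refine LipschitzWith.of_dist_le_mul fun y z => ?_
    rw [Real.dist_eq, dist_eq_norm]
    have : (y - s) - (z - s) = y - z := by abel
    calc |‖y - s‖ - ‖z - s‖| ≤ ‖(y - s) - (z - s)‖ := abs_norm_sub_norm_le _ _
      _ = 1 * dist y z := by rw [this, dist_eq_norm]; ring
  have hDn : ‖fderiv ℝ (fun y : E2 => ‖y - s‖) x‖ ≤ 1 := by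
    simpa using norm_fderiv_le_of_lipschitz ℝ hlip (x₀ := x)
  -- derivative of the scalar profile
  have hA : HasDerivAt (fun u : ℝ => ε - u) (-1) r := by
    simpa using (hasDerivAt_id r).const_sub ε
  have hB : HasDerivAt (fun u : ℝ => ε ^ 2 - u) (-1) r := by
    simpa using (hasDerivAt_id r).const_sub (ε ^ 2)
  have hdiv : HasDerivAt (fun u : ℝ => (ε - u) / (ε ^ 2 - u))
      ((-1 * (ε ^ 2 - r) - (ε - r) * -1) / (ε ^ 2 - r) ^ 2) r := hA.div hB hden
  have hexp : HasDerivAt (fun u : ℝ => Real.exp ((ε - u) / (ε ^ 2 - u)))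
      (Real.exp ((ε - r) / (ε ^ 2 - r)) *
        ((-1 * (ε ^ 2 - r) - (ε - r) * -1) / (ε ^ 2 - r) ^ 2)) r := hdiv.exp
  set c : ℝ := Real.exp ((ε - r) / (ε ^ 2 - r)) *
      ((-1 * (ε ^ 2 - r) - (ε - r) * -1) / (ε ^ 2 - r) ^ 2) with hc
  have hF : HasFDerivAt (fun y : E2 => Real.exp ((ε - ‖y - s‖) / (ε ^ 2 - ‖y - s‖)))
      (c • fderiv ℝ (fun y : E2 => ‖y - s‖) x) x :=
    by have := hexp.comp_hasFDerivAt x hn.hasFDerivAt; exact this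
  -- chiCut agrees with the smooth profile near x
  have hU : IsOpen {y : E2 | ε ^ 2 < ‖y - s‖ ∧ ‖y - s‖ < ε} := by
    have hcont : Continuous fun y : E2 => ‖y - s‖ :=
      (continuous_id.sub continuous_const).norm
    exact (isOpen_lt continuous_const hcont).inter (isOpen_lt hcont continuous_const)
  have hev : chiCut s ε =ᶠ[nhds x]
      fun y : E2 => Real.exp ((ε - ‖y - s‖) / (ε ^ 2 - ‖y - s‖)) := by
    filter_upwards [hU.mem_nhds ⟨h1, h2⟩] with y hy
    rcases hy with ⟨hy1, hy2⟩
    simp only [chiCut, if_neg (not_le.mpr hy1), if_pos hy2]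
  have hchi : fderiv ℝ (chiCut s ε) x = c • fderiv ℝ (fun y : E2 => ‖y - s‖) x := by
    rw [hev.fderiv_eq, hF.fderiv]
  -- numeric bound
  set t : ℝ := r - ε ^ 2 with ht
  have ht0 : 0 < t := by simp only [ht]; linarith
  set a : ℝ := ε - ε ^ 2 with ha
  have ha0 : 0 < a := by nlinarith
  have hcval : c = Real.exp (1 - a / t) * (a / t ^ 2) := by
    rw [hc]
    have h1' : (ε - r) / (ε ^ 2 - r) = 1 - a / t := by
      field_simp
      ring
    have h2' : (-1 * (ε ^ 2 - r) - (ε - r) * -1) / (ε ^ 2 - r) ^ 2 = a / t ^ 2 := by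
      rw [show (ε ^ 2 - r) ^ 2 = t ^ 2 by ring,
        show (-1 * (ε ^ 2 - r) - (ε - r) * -1) = a by simp only [ha]; ring]
    rw [h1', h2']
  have hcpos : 0 < c := by
    rw [hcval]
    exact mul_pos (Real.exp_pos _) (div_pos ha0 (pow_pos ht0 2))
  have hnormchi : ‖fderiv ℝ (chiCut s ε) x‖ ≤ c := by
    rw [hchi]
    calc ‖c • fderiv ℝ (fun y : E2 => ‖y - s‖) x‖ = |c| * ‖fderiv ℝ (fun y : E2 => ‖y - s‖) x‖ := by
          rw [norm_smul, Real.norm_eq_abs]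
      _ ≤ |c| * 1 := by gcongr
      _ = c := by rw [mul_one, abs_of_pos hcpos]
  have hGx : |G x| ≤ M * ε ^ (1 + γ) := by
    have hr1 : r < 1 := by linarith
    exact (hG x hr1).trans
      (mul_le_mul_of_nonneg_left (Real.rpow_le_rpow hr0.le h2.le (by linarith)) hM)
  -- key exponential estimate : ε * c ≤ 8 / exp 1
  have hu0 : 0 < a / t := div_pos ha0 ht0
  have hkey : Real.exp 1 ^ 2 * (a / t) ^ 2 / 4 ≤ Real.exp (a / t) := exp_sq_bound hu0
  have hec : ε * c ≤ 8 / Real.exp 1 := by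
    rw [hcval]
    have hexpdec : Real.exp (1 - a / t) = Real.exp 1 / Real.exp (a / t) := by
      rw [Real.exp_sub]
    rw [hexpdec]
    have hEpos := Real.exp_pos (1:ℝ)
    have hEu := Real.exp_pos (a / t)
    have h2a : ε ≤ 2 * a := by
      have : ε ^ 2 ≤ ε / 2 := by nlinarith
      simp only [ha]; linarith
    have hkey' : Real.exp 1 ^ 2 * a ^ 2 / 4 ≤ Real.exp (a / t) * t ^ 2 := by
      have ht2 : (a / t) ^ 2 = a ^ 2 / t ^ 2 := by rw [div_pow]
      rw [ht2] at hkey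
      calc Real.exp 1 ^ 2 * a ^ 2 / 4
          = Real.exp 1 ^ 2 * (a ^ 2 / t ^ 2) / 4 * t ^ 2 := by
            field_simp
        _ ≤ Real.exp (a / t) * t ^ 2 :=
            mul_le_mul_of_nonneg_right hkey (le_of_lt (pow_pos ht0 2))
    have heq : ε * (Real.exp 1 / Real.exp (a / t) * (a / t ^ 2))
        = ε * Real.exp 1 * a / (Real.exp (a / t) * t ^ 2) := by
      field_simp
    rw [heq, div_le_div_iff₀ (by positivity) hEpos]
    have hEa : 0 < Real.exp 1 ^ 2 * a := by positivity
    calc ε * Real.exp 1 * a * Real.exp 1 = ε * (Real.exp 1 ^ 2 * a) := by ring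
      _ ≤ 2 * a * (Real.exp 1 ^ 2 * a) := mul_le_mul_of_nonneg_right h2a hEa.le
      _ = 8 * (Real.exp 1 ^ 2 * a ^ 2 / 4) := by ring
      _ ≤ 8 * (Real.exp (a / t) * t ^ 2) := by linarith
  calc |G x| * ‖fderiv ℝ (chiCut s ε) x‖ ≤ (M * ε ^ (1 + γ)) * c := by
        apply mul_le_mul hGx hnormchi (norm_nonneg _) (by positivity)
    _ = (M * ε ^ γ) * (ε * c) := by
        rw [Real.rpow_add hε0, Real.rpow_one]; ring
    _ ≤ (M * ε ^ γ) * (8 / Real.exp 1) := by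
        apply mul_le_mul_of_nonneg_left hec (by positivity)
    _ = (8 * M / Real.exp 1) * ε ^ γ := by ring
end

section
/- Let s ∈ ℝ², γ > 0, M ≥ 0, T > 0, and let Γ ⊆ ℝ² be a Borel set with μH¹(Γ) < ∞, where μH¹ is the 1-dimensional Hausdorff measure on ℝ². Let G : ℝ × ℝ² → ℝ be measurable with |G(t,x)| ≤ M · ‖x − s‖^{1+γ} for all t ∈ (0,T) and all x with ‖x − s‖ < 1, and let ψ : ℝ² → ℝ be measurable with |ψ| ≤ 1. For 0 < ε ≤ 1/2 consider I(ε) := ∫_{t∈(0,T)} ∫_{x∈Γ} |G(t,x)|² · |ψ(x)|² · ‖Dχ_{ε,s}(x)‖² · 1_{{ε² < ‖x−s‖ < ε}}(x) dμH¹(x) dt. Then I(ε) ≤ (8M/e)² · ε^{2γ} · T · μH¹(Γ), and in particular I(ε) → 0 as ε → 0⁺. (This is fact (C) in the proof of the main theorem: the term ‖G ψ₁^ε ∇_x χ_ε‖_{L²((0,T)×Γ_d)} tends to zero.) -/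
open MeasureTheory

/-- The quantity
`I(ε) = ∫_{t∈(0,T)} ∫_{x∈Γ} |G(t,x)|² |ψ(x)|² ‖Dχ_{ε,s}(x)‖² 1_{ε² < ‖x-s‖ < ε}(x) dμH¹ dt`,
where `μH¹` is the 1-dimensional Hausdorff measure on ℝ². -/
noncomputable def Ieps (s : E2) (T : ℝ) (Γ : Set E2) (G : ℝ × E2 → ℝ) (ψ : E2 → ℝ)
    (ε : ℝ) : ENNReal :=
  ∫⁻ t in Set.Ioo (0 : ℝ) T, ∫⁻ x in Γ,
    ENNReal.ofReal (|G (t, x)| ^ 2 * |ψ x| ^ 2 * ‖fderiv ℝ (chiCut s ε) x‖ ^ 2 *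
      Set.indicator {y : E2 | ε ^ 2 < ‖y - s‖ ∧ ‖y - s‖ < ε} (fun _ => (1 : ℝ)) x)
    ∂(μH[1]) ∂(volume)

/-- Key real inequality: bound on the derivative factor. -/
lemma chiCut_key_ineq {ε r : ℝ} (hε : 0 < ε) (hε2 : ε ≤ 1 / 2)
    (h1 : ε ^ 2 < r) (h2 : r < ε) :
    Real.exp ((ε - r) / (ε ^ 2 - r)) * ((ε - ε ^ 2) / (ε ^ 2 - r) ^ 2)
      ≤ 8 / (Real.exp 1 * ε) := by
  set d : ℝ := r - ε ^ 2 with hd_def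
  have hd : 0 < d := by simp [hd_def]; linarith
  set u : ℝ := (ε - r) / d with hu_def
  have hu : 0 ≤ u := by
    apply div_nonneg (by linarith) hd.le
  have hud : u * d = ε - r := by rw [hu_def, div_mul_cancel₀ _ hd.ne']
  have e1 : (ε - r) / (ε ^ 2 - r) = -u := by
    rw [hu_def]
    rw [show (ε ^ 2 - r) = -d by rw [hd_def]; ring]
    rw [div_neg]
  have e2 : ε - ε ^ 2 = (u + 1) * d := by
    have : (u + 1) * d = u * d + d := by ring
    rw [this, hud, hd_def]; ring
  have e3 : (ε ^ 2 - r) ^ 2 = d ^ 2 := by rw [hd_def]; ring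
  rw [e1, e2, e3]
  have hexp : Real.exp (-u) * ((u + 1) * d / d ^ 2)
      = Real.exp (-u) * (u + 1) ^ 2 / ((u + 1) * d) := by
    have hu1 : (0:ℝ) < u + 1 := by linarith
    field_simp
  rw [hexp, ← e2]
  -- core bound : exp(-u) * (u+1)^2 ≤ 4 / exp 1
  have hcore : Real.exp (-u) * (u + 1) ^ 2 ≤ 4 / Real.exp 1 := by
    have h := Real.add_one_le_exp ((u - 1) / 2)
    have h' : (u + 1) / 2 ≤ Real.exp ((u - 1) / 2) := by linarith
    have hnn : (0:ℝ) ≤ (u + 1) / 2 := by linarith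
    have hsq : ((u + 1) / 2) ^ 2 ≤ Real.exp ((u - 1) / 2) ^ 2 := by
      exact pow_le_pow_left₀ hnn h' 2
    have hexp2 : Real.exp ((u - 1) / 2) ^ 2 = Real.exp (u - 1) := by
      rw [← Real.exp_nat_mul]; ring_nf
    rw [hexp2] at hsq
    have he : Real.exp (u - 1) = Real.exp u / Real.exp 1 := by
      rw [Real.exp_sub]
    have hneg : Real.exp (-u) = 1 / Real.exp u := by
      rw [Real.exp_neg]; exact (inv_eq_one_div _)
    rw [hneg]
    rw [he] at hsq
    have hEu : 0 < Real.exp u := Real.exp_pos u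
    have hE1 : 0 < Real.exp 1 := Real.exp_pos 1
    rw [div_mul_eq_mul_div, div_le_div_iff₀ hEu hE1]
    calc (1:ℝ) * (u + 1) ^ 2 * Real.exp 1 = ((u + 1) / 2) ^ 2 * (4 * Real.exp 1) := by ring
      _ ≤ (Real.exp u / Real.exp 1) * (4 * Real.exp 1) := by
          apply mul_le_mul_of_nonneg_right hsq (by positivity)
      _ = 4 * Real.exp u := by field_simp
  -- and ε - ε² ≥ ε/2
  have hden : ε / 2 ≤ ε - ε ^ 2 := by nlinarith
  have hdenpos : (0:ℝ) < ε - ε ^ 2 := by nlinarith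
  calc Real.exp (-u) * (u + 1) ^ 2 / (ε - ε ^ 2)
      ≤ (4 / Real.exp 1) / (ε - ε ^ 2) := by gcongr
    _ ≤ (4 / Real.exp 1) / (ε / 2) := by gcongr
    _ = 8 / (Real.exp 1 * ε) := by
        field_simp
        ring

/-- Bound on the derivative of the cutoff function on the annulus. -/
lemma norm_fderiv_chiCut_le (s : E2) {ε : ℝ} (hε : 0 < ε) (hε2 : ε ≤ 1 / 2)
    {x : E2} (h1 : ε ^ 2 < ‖x - s‖) (h2 : ‖x - s‖ < ε) :
    ‖fderiv ℝ (chiCut s ε) x‖ ≤ 8 / (Real.exp 1 * ε) := by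
  set r : ℝ := ‖x - s‖ with hr
  have hxs : x - s ≠ 0 := by
    intro h
    rw [hr] at h1 h2
    rw [h, norm_zero] at h1
    nlinarith
  have hne : ε ^ 2 - r ≠ 0 := by intro h; nlinarith
  -- the norm function
  have hnd : DifferentiableAt ℝ (fun y : E2 => ‖y - s‖) x :=
    DifferentiableAt.norm ℝ (differentiableAt_id.sub_const s) hxs
  set N := fderiv ℝ (fun y : E2 => ‖y - s‖) x with hN_def
  have hN : HasFDerivAt (fun y : E2 => ‖y - s‖) N x := hnd.hasFDerivAt
  have hlip : LipschitzWith 1 (fun y : E2 => ‖y - s‖) := by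
    have : LipschitzWith 1 (fun y : E2 => y - s) :=
      (Isometry.of_dist_eq fun a b => dist_sub_right a b s).lipschitz
    have h := lipschitzWith_one_norm.comp this; rw [mul_one] at h; exact h
  have hNle : ‖N‖ ≤ 1 := by simpa using hN.le_of_lipschitz hlip
  -- the scalar function
  have hinner : HasDerivAt (fun u : ℝ => (ε - u) / (ε ^ 2 - u))
      ((ε - ε ^ 2) / (ε ^ 2 - r) ^ 2) r := by
    have ha : HasDerivAt (fun u : ℝ => ε - u) (-1) r := (hasDerivAt_id r).const_sub ε
    have hb : HasDerivAt (fun u : ℝ => ε ^ 2 - u) (-1) r := (hasDerivAt_id r).const_sub (ε ^ 2)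
    have := ha.div hb hne
    exact this.congr_deriv (by ring)
  set c : ℝ := Real.exp ((ε - r) / (ε ^ 2 - r)) * ((ε - ε ^ 2) / (ε ^ 2 - r) ^ 2) with hc_def
  have hφ : HasDerivAt (fun u : ℝ => Real.exp ((ε - u) / (ε ^ 2 - u))) c r := hinner.exp
  have hg : HasFDerivAt (fun y : E2 => Real.exp ((ε - ‖y - s‖) / (ε ^ 2 - ‖y - s‖)))
      (c • N) x := by have := hφ.comp_hasFDerivAt x hN; exact this
  -- chiCut agrees with g near x
  have hU : IsOpen {y : E2 | ε ^ 2 < ‖y - s‖ ∧ ‖y - s‖ < ε} := by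
    have hcont : Continuous fun y : E2 => ‖y - s‖ := (continuous_id.sub continuous_const).norm
    have : {y : E2 | ε ^ 2 < ‖y - s‖ ∧ ‖y - s‖ < ε}
        = (fun y : E2 => ‖y - s‖) ⁻¹' (Set.Ioo (ε ^ 2) ε) := rfl
    rw [this]
    exact isOpen_Ioo.preimage hcont
  have hxU : x ∈ {y : E2 | ε ^ 2 < ‖y - s‖ ∧ ‖y - s‖ < ε} := ⟨h1, h2⟩
  have heq : chiCut s ε =ᶠ[nhds x]
      (fun y : E2 => Real.exp ((ε - ‖y - s‖) / (ε ^ 2 - ‖y - s‖))) := by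
    filter_upwards [hU.mem_nhds hxU] with y hy
    rcases hy with ⟨hy1, hy2⟩
    simp only [chiCut, if_neg (not_le.mpr hy1), if_pos hy2]
  have hfd : fderiv ℝ (chiCut s ε) x = c • N := by
    rw [Filter.EventuallyEq.fderiv_eq heq, hg.fderiv]
  rw [hfd]
  have hcpos : 0 ≤ c := by
    rw [hc_def]
    apply mul_nonneg (Real.exp_pos _).le
    apply div_nonneg (by nlinarith) (by positivity)
  calc ‖c • N‖ = |c| * ‖N‖ := by rw [norm_smul, Real.norm_eq_abs]
    _ ≤ |c| * 1 := by apply mul_le_mul_of_nonneg_left hNle (abs_nonneg c)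
    _ = c := by rw [mul_one, abs_of_nonneg hcpos]
    _ ≤ 8 / (Real.exp 1 * ε) := chiCut_key_ineq hε hε2 h1 h2

/-- fact (C) in the proof of the main theorem: under the domination
condition `|G(t,x)| ≤ M ‖x - s‖^{1+γ}` near `s` and `|ψ| ≤ 1`, for every
`0 < ε ≤ 1/2` one has `I(ε) ≤ (8M/e)² ε^{2γ} T μH¹(Γ)`, and `I(ε) → 0` as `ε → 0⁺`. -/
theorem Ieps_bound_and_tendsto_zero (s : E2) (γ M T : ℝ) (hγ : 0 < γ) (hM : 0 ≤ M)
    (hT : 0 < T) (Γ : Set E2) (hΓ : MeasurableSet Γ) (hΓfin : μH[1] Γ < ⊤)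
    (G : ℝ × E2 → ℝ) (hGmeas : Measurable G)
    (hG : ∀ t ∈ Set.Ioo (0 : ℝ) T, ∀ x : E2, ‖x - s‖ < 1 →
      |G (t, x)| ≤ M * ‖x - s‖ ^ (1 + γ))
    (ψ : E2 → ℝ) (hψmeas : Measurable ψ) (hψ : ∀ x : E2, |ψ x| ≤ 1) :
    (∀ ε : ℝ, 0 < ε → ε ≤ 1 / 2 →
      Ieps s T Γ G ψ ε ≤
        ENNReal.ofReal ((8 * M / Real.exp 1) ^ 2 * ε ^ (2 * γ) * T) * μH[1] Γ) ∧
    Filter.Tendsto (Ieps s T Γ G ψ) (nhdsWithin 0 (Set.Ioi 0)) (nhds 0) := by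
  have hbound : ∀ ε : ℝ, 0 < ε → ε ≤ 1 / 2 →
      Ieps s T Γ G ψ ε ≤
        ENNReal.ofReal ((8 * M / Real.exp 1) ^ 2 * ε ^ (2 * γ) * T) * μH[1] Γ := by
    intro ε hε hε2
    set C : ℝ := (8 * M / Real.exp 1) ^ 2 * ε ^ (2 * γ) with hC_def
    have hCnn : 0 ≤ C := by positivity
    -- pointwise bound
    have hpt : ∀ t ∈ Set.Ioo (0:ℝ) T, ∀ x : E2,
        |G (t, x)| ^ 2 * |ψ x| ^ 2 * ‖fderiv ℝ (chiCut s ε) x‖ ^ 2 *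
          Set.indicator {y : E2 | ε ^ 2 < ‖y - s‖ ∧ ‖y - s‖ < ε} (fun _ => (1:ℝ)) x ≤ C := by
      intro t ht x
      by_cases hx : x ∈ {y : E2 | ε ^ 2 < ‖y - s‖ ∧ ‖y - s‖ < ε}
      · rw [Set.indicator_of_mem hx, mul_one]
        obtain ⟨h1, h2⟩ := hx
        have hr1 : ‖x - s‖ < 1 := lt_of_lt_of_le h2 (by linarith)
        have hGb : |G (t, x)| ≤ M * ε ^ (1 + γ) := by
          refine (hG t ht x hr1).trans ?_
          apply mul_le_mul_of_nonneg_left ?_ hM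
          exact Real.rpow_le_rpow (norm_nonneg _) h2.le (by linarith)
        have hDb : ‖fderiv ℝ (chiCut s ε) x‖ ≤ 8 / (Real.exp 1 * ε) :=
          norm_fderiv_chiCut_le s hε hε2 h1 h2
        have hGb2 : |G (t, x)| ^ 2 ≤ (M * ε ^ (1 + γ)) ^ 2 :=
          pow_le_pow_left₀ (abs_nonneg _) hGb 2
        have hψ2 : |ψ x| ^ 2 ≤ 1 := by nlinarith [hψ x, abs_nonneg (ψ x)]
        have hD2 : ‖fderiv ℝ (chiCut s ε) x‖ ^ 2 ≤ (8 / (Real.exp 1 * ε)) ^ 2 :=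
          pow_le_pow_left₀ (norm_nonneg _) hDb 2
        have hstep : |G (t, x)| ^ 2 * |ψ x| ^ 2 * ‖fderiv ℝ (chiCut s ε) x‖ ^ 2
            ≤ (M * ε ^ (1 + γ)) ^ 2 * 1 * (8 / (Real.exp 1 * ε)) ^ 2 := by
          apply mul_le_mul (mul_le_mul hGb2 hψ2 (sq_nonneg _) (by positivity)) hD2
            (sq_nonneg _) (by positivity)
        refine hstep.trans_eq ?_
        have hrw1 : ε ^ (1 + γ) = ε * ε ^ γ := by
          rw [Real.rpow_add hε, Real.rpow_one]
        have hrw2 : ε ^ (2 * γ) = (ε ^ γ) ^ 2 := by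
          rw [mul_comm, ← Real.rpow_natCast (ε ^ γ) 2, ← Real.rpow_mul hε.le]
          norm_num
        rw [hC_def, hrw1, hrw2]
        have hE1 : Real.exp 1 ≠ 0 := (Real.exp_pos 1).ne'
        have hE2 : Real.exp 1 ^ 2 = Real.exp 2 := by
          rw [← Real.exp_nat_mul]; norm_num
        field_simp
      · rw [Set.indicator_of_notMem hx, mul_zero]
        exact hCnn
    -- integrate
    have hinner : ∀ t ∈ Set.Ioo (0:ℝ) T,
        (∫⁻ x in Γ, ENNReal.ofReal (|G (t, x)| ^ 2 * |ψ x| ^ 2 *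
          ‖fderiv ℝ (chiCut s ε) x‖ ^ 2 *
          Set.indicator {y : E2 | ε ^ 2 < ‖y - s‖ ∧ ‖y - s‖ < ε} (fun _ => (1:ℝ)) x)
          ∂(μH[1])) ≤ ENNReal.ofReal C * μH[1] Γ := by
      intro t ht
      calc _ ≤ ∫⁻ _ in Γ, ENNReal.ofReal C ∂(μH[1]) :=
            lintegral_mono fun x => ENNReal.ofReal_le_ofReal (hpt t ht x)
        _ = ENNReal.ofReal C * μH[1] Γ := setLIntegral_const Γ _
    calc Ieps s T Γ G ψ ε
        ≤ ∫⁻ _ in Set.Ioo (0:ℝ) T, ENNReal.ofReal C * μH[1] Γ ∂(volume) :=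
          setLIntegral_mono' measurableSet_Ioo hinner
      _ = (ENNReal.ofReal C * μH[1] Γ) * volume (Set.Ioo (0:ℝ) T) := setLIntegral_const _ _
      _ = ENNReal.ofReal (C * T) * μH[1] Γ := by
          rw [Real.volume_Ioo, sub_zero, ENNReal.ofReal_mul hCnn]
          exact mul_right_comm _ _ _
  refine ⟨hbound, ?_⟩
  -- upper bound function tends to 0
  have hrpow : Filter.Tendsto (fun ε : ℝ => ε ^ (2 * γ)) (nhdsWithin 0 (Set.Ioi 0))
      (nhds 0) := by
    have hc : ContinuousAt (fun ε : ℝ => ε ^ (2 * γ)) 0 :=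
      Real.continuousAt_rpow_const 0 (2 * γ) (Or.inr (by positivity))
    have : Filter.Tendsto (fun ε : ℝ => ε ^ (2 * γ)) (nhdsWithin 0 (Set.Ioi 0))
        (nhds ((0:ℝ) ^ (2 * γ))) := hc.tendsto.mono_left nhdsWithin_le_nhds
    rwa [Real.zero_rpow (by positivity : (2:ℝ) * γ ≠ 0)] at this
  have hreal : Filter.Tendsto (fun ε : ℝ => (8 * M / Real.exp 1) ^ 2 * ε ^ (2 * γ) * T)
      (nhdsWithin 0 (Set.Ioi 0)) (nhds 0) := by
    have := (hrpow.const_mul ((8 * M / Real.exp 1) ^ 2)).mul_const T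
    simpa using this
  have hupper : Filter.Tendsto
      (fun ε : ℝ => ENNReal.ofReal ((8 * M / Real.exp 1) ^ 2 * ε ^ (2 * γ) * T) * μH[1] Γ)
      (nhdsWithin 0 (Set.Ioi 0)) (nhds 0) := by
    have h1 : Filter.Tendsto
        (fun ε : ℝ => ENNReal.ofReal ((8 * M / Real.exp 1) ^ 2 * ε ^ (2 * γ) * T))
        (nhdsWithin 0 (Set.Ioi 0)) (nhds 0) := by
      have := ENNReal.tendsto_ofReal hreal
      simpa using this
    have := ENNReal.Tendsto.mul_const h1 (Or.inr hΓfin.ne)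
    simpa using this
  refine tendsto_of_tendsto_of_tendsto_of_le_of_le' tendsto_const_nhds hupper
    (Filter.Eventually.of_forall fun ε => zero_le) ?_
  filter_upwards [Ioc_mem_nhdsGT_of_mem (by norm_num : (0:ℝ) ∈ Set.Ico 0 (1/2))] with ε hε
  exact hbound ε hε.1 hε.2
end
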